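/- arXiv:2102.06002 — 2 statements merged into one kernel-verified Lean document; each statement's English description precedes it below -/
import Mathlib

section
/- Let p^1,...,p^m > 0 sum to 1, τ^j = ∑_{k>j} p^k, and θ^j = log(p^{j+1}/p^j). Then the inverse Ad-Cat link formula holds: τ = QPL exp(Lθ) / (1 + e_1ᵀ PL exp(Lθ)), where Q = -I + 1e_1ᵀ + e_1e_1ᵀ, P is the cyclic permutation matrix (a^1,...,a^{m-1}) ↦ (a^{m-1},a^1,...,a^{m-2}), L is the lower-triangular matrix of ones, and exp is entrywise. -/
/-- Inverse Adjacent-Categories link: with `θʲ = log(p^{j+1}/pʲ)` and tail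
probabilities `τʲ = ∑_{k>j} pᵏ`, one has
`τ = Q P L exp(Lθ) / (1 + e₁ᵀ P L exp(Lθ))`, where `Q = -I + 1e₁ᵀ + e₁e₁ᵀ`,
`P` the cyclic permutation `(a¹,...,a^{m-1}) ↦ (a^{m-1},a¹,...,a^{m-2})`, and
`L` the lower-triangular matrix of ones. Here `m = n+2`, and `k : Fin (n+1)`
stands for the index `j = k+1`. -/
theorem adcat_inverse_link (n : ℕ) (m : ℕ) (hm : m = n + 2)
    (p : ℕ → ℝ) (hp : ∀ l ∈ Finset.Icc 1 m, 0 < p l)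
    (hsum : ∑ l ∈ Finset.Icc 1 m, p l = 1)
    (θ : Fin (n + 1) → ℝ)
    (hθ : ∀ k, θ k = Real.log (p ((k : ℕ) + 2) / p ((k : ℕ) + 1)))
    (τ : Fin (n + 1) → ℝ)
    (hτ : ∀ k, τ k = ∑ l ∈ Finset.Icc ((k : ℕ) + 2) m, p l)
    (L : Matrix (Fin (n + 1)) (Fin (n + 1)) ℝ)
    (hL : ∀ j k, L j k = if k ≤ j then 1 else 0)
    (P : Matrix (Fin (n + 1)) (Fin (n + 1)) ℝ)
    (hP : ∀ (a : Fin (n + 1) → ℝ) (j), P.mulVec a j = a (j - 1))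
    (Q : Matrix (Fin (n + 1)) (Fin (n + 1)) ℝ)
    (hQ : Q = -(1 : Matrix (Fin (n + 1)) (Fin (n + 1)) ℝ)
        + Matrix.vecMulVec (fun _ => 1) (Pi.single 0 1)
        + Matrix.vecMulVec (Pi.single 0 1) (Pi.single 0 1)) :
    ∀ k, τ k = (Q * P * L).mulVec (fun r => Real.exp (L.mulVec θ r)) k
        / (1 + (P * L).mulVec (fun r => Real.exp (L.mulVec θ r)) 0) := by
  intro k
  have hppos : ∀ i : ℕ, 1 ≤ i → i ≤ m → 0 < p i := fun i h1 h2 =>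
    hp i (Finset.mem_Icc.mpr ⟨h1, h2⟩)
  have hp1 : 0 < p 1 := hppos 1 le_rfl (by omega)
  set E : Fin (n + 1) → ℝ := fun r => Real.exp (L.mulVec θ r) with hEdef
  -- Step 1: E r = p (r+2) / p 1
  have hE : ∀ r : Fin (n + 1), E r = p ((r : ℕ) + 2) / p 1 := by
    intro r
    have hlog : L.mulVec θ r = Real.log (p ((r : ℕ) + 2)) - Real.log (p 1) := by
      have h1 : L.mulVec θ r
          = ∑ i ∈ Finset.range (n + 1), (if i ≤ (r : ℕ) then
              (Real.log (p (i + 2)) - Real.log (p (i + 1))) else 0) := by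
        rw [← Fin.sum_univ_eq_sum_range (fun i => if i ≤ (r : ℕ) then
              (Real.log (p (i + 2)) - Real.log (p (i + 1))) else 0)]
        simp only [Matrix.mulVec, dotProduct, hL, ite_mul, one_mul, zero_mul]
        refine Finset.sum_congr rfl fun j _ => ?_
        have hj := j.isLt
        rw [hθ j, Real.log_div (hppos _ (by omega) (by omega)).ne'
            (hppos _ (by omega) (by omega)).ne']
        exact if_congr Fin.le_def rfl rfl
      rw [h1]
      have h2 : ∑ i ∈ Finset.range (n + 1), (if i ≤ (r : ℕ) then
            (Real.log (p (i + 2)) - Real.log (p (i + 1))) else 0)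
          = ∑ i ∈ Finset.range ((r : ℕ) + 1),
              (Real.log (p (i + 2)) - Real.log (p (i + 1))) := by
        rw [← Finset.sum_filter]
        apply Finset.sum_congr _ fun _ _ => rfl
        ext i
        have := r.isLt
        simp only [Finset.mem_filter, Finset.mem_range, Nat.lt_succ_iff]
        omega
      rw [h2]
      have := Finset.sum_range_sub (fun i => Real.log (p (i + 1))) ((r : ℕ) + 1)
      simpa using this
    have hx : 0 < p ((r : ℕ) + 2) := hppos _ (by omega) (by have := r.isLt; omega)
    rw [hEdef]
    simp only [hlog, Real.exp_sub, Real.exp_log hx, Real.exp_log hp1]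
  -- Step 2: cumulative sums
  have hLE : ∀ j : Fin (n + 1), L.mulVec E j
      = (∑ l ∈ Finset.Ico 2 ((j : ℕ) + 3), p l) / p 1 := by
    intro j
    have h1 : L.mulVec E j = ∑ i ∈ Finset.range (n + 1),
        (if i ≤ (j : ℕ) then p (i + 2) / p 1 else 0) := by
      rw [← Fin.sum_univ_eq_sum_range (fun i => if i ≤ (j : ℕ) then p (i + 2) / p 1 else 0)]
      simp only [Matrix.mulVec, dotProduct, hL, ite_mul, one_mul, zero_mul]
      refine Finset.sum_congr rfl fun r _ => ?_
      rw [hE r]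
      exact if_congr Fin.le_def rfl rfl
    rw [h1]
    have h2 : ∑ i ∈ Finset.range (n + 1), (if i ≤ (j : ℕ) then p (i + 2) / p 1 else 0)
        = ∑ i ∈ Finset.range ((j : ℕ) + 1), p (i + 2) / p 1 := by
      rw [← Finset.sum_filter]
      apply Finset.sum_congr _ fun _ _ => rfl
      ext i
      have := j.isLt
      simp only [Finset.mem_filter, Finset.mem_range, Nat.lt_succ_iff]
      omega
    rw [h2, Finset.sum_Ico_eq_sum_range, ← Finset.sum_div]
    congr 1
    have h3 : (j : ℕ) + 3 - 2 = (j : ℕ) + 1 := by omega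
    rw [h3]
    exact Finset.sum_congr rfl fun i _ => by rw [Nat.add_comm]
  -- Step 3: relate hsum
  have hIcc : ∀ a b : ℕ, Finset.Icc a b = Finset.Ico a (b + 1) := fun a b =>
    (Finset.Ico_add_one_right_eq_Icc a b).symm
  have hsum' : p 1 + ∑ l ∈ Finset.Ico 2 (m + 1), p l = 1 := by
    rw [hIcc] at hsum
    rw [← hsum, ← Finset.sum_Ico_consecutive p (by omega : 1 ≤ 2) (by omega : 2 ≤ m + 1)]
    norm_num
  -- the vector w = P L E
  have hw : ∀ j : Fin (n + 1), (P * L).mulVec E j = L.mulVec E (j - 1) := by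
    intro j
    rw [← Matrix.mulVec_mulVec, hP]
  have hw0 : (P * L).mulVec E 0 = (∑ l ∈ Finset.Ico 2 (m + 1), p l) / p 1 := by
    rw [hw 0, hLE]
    have : (((0 : Fin (n + 1)) - 1 : Fin (n + 1)) : ℕ) = n := by
      rw [Fin.coe_sub_one]
      simp
    rw [this, hm]
  have hden : 1 + (P * L).mulVec E 0 = 1 / p 1 := by
    rw [hw0]
    field_simp
    linarith [hsum']
  -- Step 4: numerator
  have hnum : (Q * P * L).mulVec E k
      = -( (P * L).mulVec E k) + (P * L).mulVec E 0
        + (if k = 0 then (P * L).mulVec E 0 else 0) := by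
    have : (Q * P * L) = Q * (P * L) := by rw [Matrix.mul_assoc]
    rw [this, ← Matrix.mulVec_mulVec, hQ]
    set w := (P * L).mulVec E with hwdef
    rw [Matrix.add_mulVec, Matrix.add_mulVec, Matrix.neg_mulVec, Matrix.one_mulVec]
    simp only [Pi.add_apply, Pi.neg_apply]
    congr 1
    · congr 1
      simp [Matrix.mulVec, dotProduct, Matrix.vecMulVec_apply, Pi.single_apply,
        ite_mul, zero_mul, one_mul]
    · simp [Matrix.mulVec, dotProduct, Matrix.vecMulVec_apply, Pi.single_apply,
        ite_mul, zero_mul, one_mul, mul_ite, mul_zero]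
  rw [hnum, hden, hτ, hIcc]
  rcases eq_or_ne k 0 with hk | hk
  · subst hk
    simp only [if_pos rfl, hw0]
    have : ((0 : Fin (n + 1)) : ℕ) = 0 := rfl
    rw [this]
    field_simp
    simp [hp1.ne']
    rw [mul_div_cancel₀ _ hp1.ne']
  · rw [if_neg hk]
    have hkv : 1 ≤ (k : ℕ) := by
      rcases Nat.eq_zero_or_pos (k : ℕ) with h | h
      · exact absurd (Fin.ext h) hk
      · exact h
    have hwk : (P * L).mulVec E k = (∑ l ∈ Finset.Ico 2 ((k : ℕ) + 2), p l) / p 1 := by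
      rw [hw k, hLE, Fin.coe_sub_one, if_neg hk]
      have h3 : (k : ℕ) - 1 + 3 = (k : ℕ) + 2 := by omega
      rw [h3]
    rw [hwk, hw0]
    have hsplit : ∑ l ∈ Finset.Ico 2 ((k : ℕ) + 2), p l
        + ∑ l ∈ Finset.Ico ((k : ℕ) + 2) (m + 1), p l
        = ∑ l ∈ Finset.Ico 2 (m + 1), p l :=
      Finset.sum_Ico_consecutive p (by omega) (by have := k.isLt; omega)
    field_simp
    linear_combination hsplit
end

section
/- Suppose Y is a discrete random variable taking finitely many values and X a random vector. Then the conditional distribution of Y given X is determined by the conditional mean E(S | X), where S is the indicator-vector encoding of Y; consequently, for any measurable map g, E(S | X) = E(S | g(X)) implies Y ⊥ X | g(X). In particular the central mean subspace equals the central subspace: 𝒮_{E(S|X)} = 𝒮_{Y|X}. -/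
open MeasureTheory ProbabilityTheory Filter

/-- The σ-algebra generated by a map. -/
@[reducible] private def sigmaOf {Ω α : Type*} [mα : MeasurableSpace α] (f : Ω → α) :
    MeasurableSpace Ω := MeasurableSpace.comap f mα

private lemma ae_sum_congr {Ω : Type*} [MeasurableSpace Ω] {μ : Measure Ω} {ι : Type*}
    (s : Finset ι) {f g : ι → Ω → ℝ} (h : ∀ i ∈ s, f i =ᵐ[μ] g i) :
    (∑ i ∈ s, f i) =ᵐ[μ] ∑ i ∈ s, g i := by
  classical
  induction s using Finset.induction_on with
  | empty => simp
  | @insert a s hi ih =>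
    rw [Finset.sum_insert hi, Finset.sum_insert hi]
    exact (h a (Finset.mem_insert_self a s)).add
      (ih fun i his => h i (Finset.mem_insert_of_mem his))

/-- For a discrete response `Y ∈ {1,...,m}` with indicator-vector encoding
`S` (`Sʲ = 1_{Y=j}`, `j = 1,...,m-1`), the conditional distribution of `Y`
given `X` is determined by `E(S|X)`: if `E(S|X) = E(S|g(X))` (componentwise,
almost surely) for a measurable map `g`, then `Y ⟂ X | g(X)`.  This is the
key fact behind the identity `𝒮_{E(Y|X)} = 𝒮_{Y|X}` for discrete responses. -/
theorem mean_encoding_determines_conditional_law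
    (m q d : ℕ) (Ω : Type*) [MeasurableSpace Ω] [StandardBorelSpace Ω] [Nonempty Ω]
    (μ : Measure Ω) [IsProbabilityMeasure μ]
    (Y : Ω → Fin m) (hY : Measurable Y)
    (X : Ω → (Fin q → ℝ)) (hX : Measurable X)
    (g : (Fin q → ℝ) → (Fin d → ℝ)) (hg : Measurable g)
    (S : Fin (m - 1) → Ω → ℝ)
    (hS : ∀ j ω, S j ω = if ((Y ω : ℕ)) = (j : ℕ) then 1 else 0)
    (hcond : ∀ j : Fin (m - 1),
      μ[S j | MeasurableSpace.comap X inferInstance]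
        =ᵐ[μ] μ[S j | MeasurableSpace.comap (fun ω => g (X ω)) inferInstance]) :
    CondIndepFun (MeasurableSpace.comap (fun ω => g (X ω)) inferInstance)
      ((hg.comp hX).comap_le) Y X μ := by
  classical
  rename_i mOm _sb _ne _ip
  have hGX : sigmaOf (fun ω => g (X ω)) ≤ sigmaOf X := by
    rintro _ ⟨t, ht, rfl⟩
    exact ⟨g ⁻¹' t, hg ht, rfl⟩
  have hXle : sigmaOf X ≤ mOm := hX.comap_le
  have hGle : sigmaOf (fun ω => g (X ω)) ≤ mOm := (hg.comp hX).comap_le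
  -- the elementary indicator functions
  set e : Fin m → Ω → ℝ := fun j => (Y ⁻¹' {j}).indicator (fun _ => (1 : ℝ)) with he_def
  have he_meas : ∀ j, MeasurableSet[mOm] (Y ⁻¹' {j}) := fun j => hY .of_discrete
  have he_int : ∀ j, Integrable (e j) μ := fun j =>
    (integrable_const (1 : ℝ)).indicator (he_meas j)
  -- S k as indicator functions
  have hSind : ∀ k : Fin (m - 1),
      S k = ({ω | (Y ω : ℕ) = (k : ℕ)} : Set Ω).indicator (fun _ => (1 : ℝ)) := by
    intro k
    funext ω
    rw [hS, Set.indicator_apply]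
    simp [Set.mem_setOf_eq]
  have hSmeas : ∀ k : Fin (m - 1), MeasurableSet[mOm] ({ω | (Y ω : ℕ) = (k : ℕ)} : Set Ω) := by
    intro k
    have : ({ω | (Y ω : ℕ) = (k : ℕ)} : Set Ω) = Y ⁻¹' {a : Fin m | (a : ℕ) = (k : ℕ)} := rfl
    rw [this]
    exact hY .of_discrete
  have hSint : ∀ k : Fin (m - 1), Integrable (S k) μ := fun k => by
    rw [hSind k]
    exact (integrable_const (1 : ℝ)).indicator (hSmeas k)
  -- key: conditional expectations of the e j coincide for mX and mG
  have hA : ∀ j : Fin m, μ[e j | sigmaOf X] =ᵐ[μ] μ[e j | sigmaOf (fun ω => g (X ω))] := by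
    intro j
    by_cases hj : (j : ℕ) < m - 1
    · have hSe : S ⟨(j : ℕ), hj⟩ = e j := by
        funext ω
        rw [hS, he_def]
        simp [Set.indicator_apply, Fin.ext_iff]
      rw [← hSe]
      exact hcond ⟨(j : ℕ), hj⟩
    · have hj' : (j : ℕ) = m - 1 := by
        have := j.isLt
        omega
      -- e j = 1 - ∑ S k
      have hsum : e j = (fun _ => (1 : ℝ)) - ∑ k : Fin (m - 1), S k := by
        funext ω
        have hYlt : (Y ω : ℕ) < m := (Y ω).isLt
        simp only [Pi.sub_apply, Finset.sum_apply, he_def, Set.indicator_apply,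
          Set.mem_preimage, Set.mem_singleton_iff]
        by_cases hy : Y ω = j
        · rw [if_pos hy]
          have hz : ∀ k ∈ (Finset.univ : Finset (Fin (m - 1))), S k ω = 0 := by
            intro k _
            rw [hS, if_neg]
            have := k.isLt
            have : (Y ω : ℕ) = m - 1 := by rw [hy, hj']
            omega
          rw [Finset.sum_congr rfl hz]
          simp
        · rw [if_neg hy]
          have hne : (Y ω : ℕ) ≠ (j : ℕ) := fun h => hy (Fin.ext h)
          have hlt : (Y ω : ℕ) < m - 1 := by omega
          have hone : ∑ k : Fin (m - 1), S k ω = 1 := by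
            rw [Finset.sum_eq_single (⟨(Y ω : ℕ), hlt⟩ : Fin (m - 1))]
            · rw [hS]; simp
            · intro k _ hk
              rw [hS, if_neg]
              intro h
              exact hk (Fin.ext h.symm)
            · simp
          rw [hone]
          norm_num
      have key : ∀ (mm : MeasurableSpace Ω), mm ≤ mOm →
          μ[e j | mm] =ᵐ[μ] (fun _ => (1 : ℝ)) - ∑ k : Fin (m - 1), μ[S k | mm] := by
        intro mm hmm
        rw [hsum]
        refine (condExp_sub (integrable_const 1)
          (integrable_finset_sum' Finset.univ fun k _ => hSint k) _).trans ?_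
        refine EventuallyEq.sub ?_ (condExp_finsetSum (fun k _ => hSint k) _)
        rw [condExp_const hmm]
      refine (key (sigmaOf X) hXle).trans (EventuallyEq.trans ?_ (key (sigmaOf (fun ω => g (X ω))) hGle).symm)
      exact EventuallyEq.sub (by rfl) (ae_sum_congr _ fun k _ => hcond k)
  -- now the conditional independence
  rw [condIndepFun_iff_condExp_inter_preimage_eq_mul hY hX]
  intro s t _ ht
  set f1 : Ω → ℝ := (Y ⁻¹' s).indicator (fun _ => (1 : ℝ)) with hf1def
  set f2 : Ω → ℝ := (X ⁻¹' t).indicator (fun _ => (1 : ℝ)) with hf2def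
  have hf1int : Integrable f1 μ := (integrable_const (1 : ℝ)).indicator (hY .of_discrete)
  have hf2int : Integrable f2 μ := (integrable_const (1 : ℝ)).indicator (hX ht)
  have hf2bdd : ∀ ω, ‖f2 ω‖ ≤ 1 := by
    intro ω
    rw [hf2def, Set.indicator_apply]
    split <;> simp
  have hprod : (Y ⁻¹' s ∩ X ⁻¹' t).indicator (fun _ => (1 : ℝ)) = f2 * f1 := by
    funext ω
    simp only [hf1def, hf2def, Pi.mul_apply, Set.indicator_apply, Set.mem_inter_iff]
    by_cases h1 : ω ∈ Y ⁻¹' s <;> by_cases h2 : ω ∈ X ⁻¹' t <;> simp [h1, h2]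
  have hf2f1int : Integrable (f2 * f1) μ :=
    hf1int.bdd_mul hf2int.1 (ae_of_all _ hf2bdd)
  -- f1 as a finite sum of the e j
  have hf1sum : f1 = ∑ j ∈ Finset.univ.filter (· ∈ s), e j := by
    funext ω
    rw [Finset.sum_apply]
    simp only [he_def, Set.indicator_apply, Set.mem_preimage, Set.mem_singleton_iff, hf1def]
    rw [Finset.sum_ite_eq]
    simp [Finset.mem_filter]
  have hf1X : μ[f1 | sigmaOf X] =ᵐ[μ] μ[f1 | sigmaOf (fun ω => g (X ω))] := by
    rw [hf1sum]
    refine (condExp_finsetSum (fun j _ => he_int j) _).trans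
      (EventuallyEq.trans ?_ (condExp_finsetSum (fun j _ => he_int j) _).symm)
    exact ae_sum_congr _ fun j _ => hA j
  have hf2smX : StronglyMeasurable[sigmaOf X] f2 := by
    refine stronglyMeasurable_const.indicator ?_
    exact ⟨t, ht, rfl⟩
  have hF : StronglyMeasurable[sigmaOf (fun ω => g (X ω))] (μ[f1 | sigmaOf (fun ω => g (X ω))]) := stronglyMeasurable_condExp
  have hFf2int : Integrable (f2 * μ[f1 | sigmaOf (fun ω => g (X ω))]) μ :=
    integrable_condExp.bdd_mul hf2int.1 (ae_of_all _ hf2bdd)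
  -- chain of identities
  have step1 : μ[(Y ⁻¹' s ∩ X ⁻¹' t).indicator (fun _ => (1 : ℝ)) | sigmaOf (fun ω => g (X ω))]
      =ᵐ[μ] μ[μ[f2 * f1 | sigmaOf X] | sigmaOf (fun ω => g (X ω))] := by
    rw [hprod]
    exact (condExp_condExp_of_le hGX hXle).symm
  have step2 : μ[f2 * f1 | sigmaOf X] =ᵐ[μ] f2 * μ[f1 | sigmaOf (fun ω => g (X ω))] :=
    (condExp_mul_of_stronglyMeasurable_left hf2smX hf2f1int hf1int).trans
      (EventuallyEq.mul (by rfl) hf1X)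
  have step3 : μ[μ[f2 * f1 | sigmaOf X] | sigmaOf (fun ω => g (X ω))] =ᵐ[μ] μ[f2 * μ[f1 | sigmaOf (fun ω => g (X ω))] | sigmaOf (fun ω => g (X ω))] :=
    condExp_congr_ae step2
  have step4 : μ[f2 * μ[f1 | sigmaOf (fun ω => g (X ω))] | sigmaOf (fun ω => g (X ω))] =ᵐ[μ] μ[f1 | sigmaOf (fun ω => g (X ω))] * μ[f2 | sigmaOf (fun ω => g (X ω))] := by
    have : f2 * μ[f1 | sigmaOf (fun ω => g (X ω))] = μ[f1 | sigmaOf (fun ω => g (X ω))] * f2 := mul_comm _ _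
    rw [this]
    exact condExp_mul_of_stronglyMeasurable_left hF (by rwa [← this]) hf2int
  filter_upwards [step1.trans (step3.trans step4)] with ω hω
  exact hω
end
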